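/- Right-tail asymptotics of the exact truncated MGF with finite upper truncation point: if b < ∞, F₀(b) − F₀(a) > 0, and f₀ has a left limit at b, i.e., f₀(x) → f₀(b−) as x ↑ b, then θ e^{-θ b} M_{(a,b)}(θ) → f₀(b−) / (F₀(b) − F₀(a)) as θ → ∞; equivalently, M_{(a,b)}(θ) ∼ θ^{-1} e^{θ b} f₀(b−) / (F₀(b) − F₀(a)). -/

import Mathlib

open MeasureTheory Set Filter

/-- The CDF `F₀` evaluated at an extended-real point `y`:
`F₀(y) = P(X ≤ y)`, with `F₀(-∞) = 0` and `F₀(∞) = 1`. -/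
noncomputable def F0 (f₀ : ℝ → ℝ) (y : EReal) : ℝ := ∫ x in {x : ℝ | (x : EReal) ≤ y}, f₀ x

/-- The truncated MGF `M_{(a,b)}(θ) = (F₀(b) − F₀(a))⁻¹ ∫_a^b e^{θx} f₀(x) dx`,
where `-∞ ≤ a < b ≤ ∞`. -/
noncomputable def Mtrunc (f₀ : ℝ → ℝ) (a b : EReal) (θ : ℝ) : ℝ :=
  (F0 f₀ b - F0 f₀ a)⁻¹ *
    ∫ x in {x : ℝ | a < (x : EReal) ∧ (x : EReal) < b}, Real.exp (θ * x) * f₀ x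

/-- **Right-tail asymptotics of the exact truncated MGF, finite upper truncation point**:
if `b < ∞`, `F₀(b) − F₀(a) > 0` and `f₀(x) → f₀(b−)` as `x ↑ b`, then
`θ e^{-θb} M_{(a,b)}(θ) → f₀(b−)/(F₀(b) − F₀(a))` as `θ → ∞`, i.e.
`M_{(a,b)}(θ) ∼ θ⁻¹ e^{θb} f₀(b−)/(F₀(b) − F₀(a))`. -/
theorem truncated_mgf_right_tail_finite_upper
    (f₀ : ℝ → ℝ) (hf_meas : Measurable f₀) (hf_nonneg : ∀ x, 0 ≤ f₀ x)
    (hf_prob : ∫ x : ℝ, f₀ x = 1)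
    (a : EReal) (b : ℝ) (hab : a < (b : EReal))
    (hFab : 0 < F0 f₀ (b : EReal) - F0 f₀ a)
    (f₀bminus : ℝ)
    (hleftlim : Tendsto f₀ (nhdsWithin b (Iio b)) (nhds f₀bminus)) :
    Tendsto (fun θ : ℝ => θ * Real.exp (-θ * b) * Mtrunc f₀ a (b : EReal) θ)
      atTop (nhds (f₀bminus / (F0 f₀ (b : EReal) - F0 f₀ a))) := by
  set L := f₀bminus with hL
  set C := F0 f₀ (b : EReal) - F0 f₀ a with hC
  set S : Set ℝ := {x : ℝ | a < (x : EReal) ∧ (x : EReal) < (b : EReal)} with hSdef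
  have hint : Integrable f₀ := by
    by_contra h
    rw [integral_undef h] at hf_prob
    exact one_ne_zero hf_prob.symm
  have hS : MeasurableSet S := by
    have : S = ((↑) : ℝ → EReal) ⁻¹' (Ioi a ∩ Iio (b : EReal)) := rfl
    rw [this]
    exact measurable_coe_real_ereal (measurableSet_Ioi.inter measurableSet_Iio)
  have hSb : S ⊆ Iio b := fun x hx => by exact_mod_cast hx.2
  -- the renormalized integral
  set g : ℝ → ℝ := fun θ => θ * ∫ x in S, Real.exp (θ * (x - b)) * f₀ x with hg
  have key : Tendsto g atTop (nhds L) := by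
    rw [Metric.tendsto_nhds]
    intro ε hε
    have hε4 : 0 < ε / 4 := by linarith
    -- get δ from the left limit
    rw [Metric.tendsto_nhdsWithin_nhds] at hleftlim
    obtain ⟨δ, hδ, hδf⟩ := hleftlim (ε / 4) hε4
    -- a real point c strictly between a and b
    obtain ⟨c, hac, hcb⟩ : ∃ c : ℝ, a < (c : EReal) ∧ c < b := by
      rcases exists_between hab with ⟨y, hy1, hy2⟩
      lift y to ℝ using ⟨(hy2.trans (EReal.coe_lt_top b)).ne, (bot_le.trans_lt hy1).ne'⟩
      exact ⟨y, hy1, by exact_mod_cast hy2⟩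
    set d : ℝ := max c (b - δ / 2) with hd
    have hdb : d < b := max_lt hcb (by linarith)
    have had : a < (d : EReal) := lt_of_lt_of_le hac (by exact_mod_cast le_max_left _ _)
    have hfd : ∀ x ∈ Ioo d b, |f₀ x - L| < ε / 4 := by
      intro x hx
      have h1 : x ∈ Iio b := hx.2
      have h2 : dist x b < δ := by
        rw [Real.dist_eq, abs_of_nonpos (by linarith [hx.2.le] : x - b ≤ 0)]
        have := le_max_right c (b - δ / 2)
        have := hx.1
        simp only [hd] at this
        linarith [lt_of_le_of_lt (le_max_right c (b - δ / 2)) hx.1]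
      have := hδf h1 h2
      rwa [Real.dist_eq] at this
    have hIooS : Ioo d b ⊆ S := fun x hx =>
      ⟨lt_trans had (by exact_mod_cast hx.1), by exact_mod_cast hx.2⟩
    -- eventual smallness
    have hk : (0:ℝ) < b - d := by linarith
    have h1 : Tendsto (fun θ : ℝ => θ * Real.exp (θ * (d - b))) atTop (nhds 0) := by
      have base := Real.tendsto_pow_mul_exp_neg_atTop_nhds_zero 1
      have comp : Tendsto (fun θ : ℝ => ((b - d) * θ) ^ 1 * Real.exp (-((b - d) * θ)))
          atTop (nhds 0) :=
        base.comp (Tendsto.const_mul_atTop hk tendsto_id)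
      have := comp.const_mul (b - d)⁻¹
      rw [mul_zero] at this
      refine this.congr fun θ => ?_
      rw [pow_one, show -((b - d) * θ) = θ * (d - b) by ring]
      field_simp
    have h2 : Tendsto (fun θ : ℝ => Real.exp (θ * (d - b))) atTop (nhds 0) := by
      apply Real.tendsto_exp_atBot.comp
      have : Tendsto (fun θ : ℝ => (b - d) * θ) atTop atTop :=
        Tendsto.const_mul_atTop hk tendsto_id
      have := (tendsto_neg_atTop_atBot).comp this
      refine this.congr fun θ => ?_
      simp; ring
    have hev1 : ∀ᶠ θ : ℝ in atTop, θ * Real.exp (θ * (d - b)) < ε / 4 := by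
      have := h1.eventually (eventually_lt_nhds hε4)  -- may not exist; fallback below
      exact this
    have hev2 : ∀ᶠ θ : ℝ in atTop, |L| * Real.exp (θ * (d - b)) < ε / 4 := by
      have := (h2.const_mul |L|)
      rw [mul_zero] at this
      exact this.eventually (eventually_lt_nhds hε4)
    filter_upwards [hev1, hev2, eventually_gt_atTop (0:ℝ)] with θ hθ1 hθ2 hθpos
    -- fixed θ estimates
    set e : ℝ → ℝ := fun x => Real.exp (θ * (x - b)) with he
    set fθ : ℝ → ℝ := fun x => e x * f₀ x with hfθ
    have hmeas : AEStronglyMeasurable fθ volume :=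
      ((Real.measurable_exp.comp ((measurable_id.sub_const b).const_mul θ)).mul
        hf_meas).aestronglyMeasurable
    have hfθ_nonneg : ∀ x, 0 ≤ fθ x := fun x => mul_nonneg (Real.exp_pos _).le (hf_nonneg x)
    have hIntS : IntegrableOn fθ S := by
      refine Integrable.mono hint.integrableOn hmeas.restrict ?_
      filter_upwards [ae_restrict_mem hS] with x hx
      rw [Real.norm_eq_abs, Real.norm_eq_abs, abs_of_nonneg (hf_nonneg x),
        abs_of_nonneg (hfθ_nonneg x)]
      have hx1 : x < b := hSb hx
      have : Real.exp (θ * (x - b)) ≤ 1 :=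
        Real.exp_le_one_iff.2 (mul_nonpos_of_nonneg_of_nonpos hθpos.le (by linarith))
      calc e x * f₀ x ≤ 1 * f₀ x := mul_le_mul_of_nonneg_right this (hf_nonneg x)
        _ = f₀ x := one_mul _
    have hIntS1 : IntegrableOn fθ (S ∩ Iic d) := hIntS.mono_set inter_subset_left
    have hIntIoo : IntegrableOn fθ (Ioo d b) := hIntS.mono_set hIooS
    have hIntE : IntegrableOn e (Ioo d b) := by
      have : Continuous e := Real.continuous_exp.comp (continuous_const.mul (continuous_id.sub continuous_const))
      exact (this.integrableOn_Icc).mono_set Ioo_subset_Icc_self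
    -- split the integral
    have hsplit : S = (S ∩ Iic d) ∪ Ioo d b := by
      ext x
      constructor
      · intro hx
        rcases le_or_gt x d with h | h
        · exact Or.inl ⟨hx, h⟩
        · exact Or.inr ⟨h, hSb hx⟩
      · rintro (hx | hx)
        · exact hx.1
        · exact hIooS hx
    have hdisj : Disjoint (S ∩ Iic d) (Ioo d b) :=
      Disjoint.mono inter_subset_right Ioo_subset_Ioi_self (by
        exact Iic_disjoint_Ioi le_rfl)
    have hsum : ∫ x in S, fθ x = (∫ x in S ∩ Iic d, fθ x) + ∫ x in Ioo d b, fθ x := by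
      conv_lhs => rw [hsplit]
      exact setIntegral_union hdisj measurableSet_Ioo hIntS1 hIntIoo
    set I1 : ℝ := ∫ x in S ∩ Iic d, fθ x with hI1
    set I2 : ℝ := ∫ x in Ioo d b, fθ x with hI2
    -- I1 bounds
    have hI1nonneg : 0 ≤ I1 := setIntegral_nonneg (hS.inter measurableSet_Iic)
      fun x _ => hfθ_nonneg x
    have hI1le : I1 ≤ Real.exp (θ * (d - b)) := by
      have step1 : I1 ≤ ∫ x in S ∩ Iic d, Real.exp (θ * (d - b)) * f₀ x := by
        refine setIntegral_mono_on hIntS1 (hint.integrableOn.const_mul _)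
          (hS.inter measurableSet_Iic) fun x hx => ?_
        have : Real.exp (θ * (x - b)) ≤ Real.exp (θ * (d - b)) :=
          Real.exp_le_exp.2 (mul_le_mul_of_nonneg_left (by have hxd : x ≤ d := hx.2; linarith : x - b ≤ d - b) hθpos.le)
        exact mul_le_mul_of_nonneg_right this (hf_nonneg x)
      have step2 : ∫ x in S ∩ Iic d, Real.exp (θ * (d - b)) * f₀ x
          = Real.exp (θ * (d - b)) * ∫ x in S ∩ Iic d, f₀ x := integral_const_mul _ _
      have step3 : ∫ x in S ∩ Iic d, f₀ x ≤ 1 := by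
        rw [← hf_prob]
        exact setIntegral_le_integral hint (ae_of_all _ hf_nonneg)
      calc I1 ≤ Real.exp (θ * (d - b)) * ∫ x in S ∩ Iic d, f₀ x := by rw [← step2]; exact step1
        _ ≤ Real.exp (θ * (d - b)) * 1 :=
            mul_le_mul_of_nonneg_left step3 (Real.exp_pos _).le
        _ = Real.exp (θ * (d - b)) := mul_one _
    -- K computation
    set K : ℝ := ∫ x in Ioo d b, e x with hKdef
    have hKval : θ * K = 1 - Real.exp (θ * (d - b)) := by
      have hde : d ≤ b := hdb.le
      have hcont : Continuous e :=
        Real.continuous_exp.comp (continuous_const.mul (continuous_id.sub continuous_const))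
      have : K = ∫ x in d..b, e x := by
        rw [intervalIntegral.integral_of_le hde, hKdef,
          MeasureTheory.integral_Ioc_eq_integral_Ioo]
      rw [this]
      have hderiv : ∀ x ∈ uIcc d b, HasDerivAt (fun x => Real.exp (θ * (x - b)) / θ) (e x) x := by
        intro x _
        have h0 : HasDerivAt (fun x : ℝ => θ * (x - b)) θ x := by
          simpa using ((hasDerivAt_id x).sub_const b).const_mul θ
        have := ((Real.hasDerivAt_exp (θ * (x - b))).comp x h0).div_const θ
        exact this.congr_deriv (mul_div_cancel_right₀ _ hθpos.ne')
      rw [intervalIntegral.integral_eq_sub_of_hasDerivAt hderiv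
        (hcont.intervalIntegrable d b)]
      rw [sub_self, mul_zero, Real.exp_zero]
      field_simp
    have hKnonneg : 0 ≤ K := setIntegral_nonneg measurableSet_Ioo fun x _ => (Real.exp_pos _).le
    have hθK : θ * K ≤ 1 := by rw [hKval]; linarith [(Real.exp_pos (θ * (d - b))).le]
    -- I2 estimate
    have hIntErr : IntegrableOn (fun x => e x * (f₀ x - L)) (Ioo d b) := by
      have : (fun x => e x * (f₀ x - L)) = fun x => fθ x - e x * L := by
        funext x; simp [hfθ]; ring
      rw [this]
      exact hIntIoo.sub (hIntE.mul_const L)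
    have hErrEq : ∫ x in Ioo d b, e x * (f₀ x - L) = I2 - L * K := by
      have : ∀ x, e x * (f₀ x - L) = fθ x - e x * L := fun x => by simp [hfθ]; ring
      simp_rw [this]
      rw [integral_sub hIntIoo (hIntE.mul_const L), integral_mul_const]
      ring
    have hErrBound : |∫ x in Ioo d b, e x * (f₀ x - L)| ≤ ε / 4 * K := by
      have habs : |∫ x in Ioo d b, e x * (f₀ x - L)| ≤ ∫ x in Ioo d b, |e x * (f₀ x - L)| :=
        by
        have h := norm_integral_le_integral_norm (μ := volume.restrict (Ioo d b))
            (fun x => e x * (f₀ x - L))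
        simp only [Real.norm_eq_abs] at h
        exact h
      have hmono : ∫ x in Ioo d b, |e x * (f₀ x - L)| ≤ ∫ x in Ioo d b, ε / 4 * e x := by
        refine setIntegral_mono_on hIntErr.abs (hIntE.const_mul _) measurableSet_Ioo fun x hx => ?_
        rw [abs_mul, abs_of_nonneg (Real.exp_pos _).le]
        rw [mul_comm (ε/4) (e x)]
        exact mul_le_mul_of_nonneg_left (hfd x hx).le (Real.exp_pos _).le
      have : ∫ x in Ioo d b, ε / 4 * e x = ε / 4 * K := integral_const_mul _ _
      linarith [habs, hmono, this.le, this.ge]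
    -- assemble
    rw [Real.dist_eq]
    simp only [hg]
    have hgval : θ * ∫ x in S, Real.exp (θ * (x - b)) * f₀ x = θ * I1 + θ * I2 := by
      have h : ∫ x in S, Real.exp (θ * (x - b)) * f₀ x = I1 + I2 := hsum
      rw [h]; ring
    rw [hgval]
    have hI2close : |θ * I2 - L| ≤ ε / 4 * (1 - Real.exp (θ * (d - b))) + |L| * Real.exp (θ * (d - b)) := by
      have : θ * I2 - L = θ * (∫ x in Ioo d b, e x * (f₀ x - L)) + L * (θ * K) - L := by
        rw [hErrEq]; ring
      rw [this, hKval]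
      have h1 : |θ * (∫ x in Ioo d b, e x * (f₀ x - L))| ≤ θ * (ε / 4 * K) := by
        rw [abs_mul, abs_of_pos hθpos]
        exact mul_le_mul_of_nonneg_left hErrBound hθpos.le
      calc |θ * (∫ x in Ioo d b, e x * (f₀ x - L)) + L * (1 - Real.exp (θ * (d - b))) - L|
          = |θ * (∫ x in Ioo d b, e x * (f₀ x - L)) + (- (L * Real.exp (θ * (d - b))))| := by
            congr 1; ring
        _ ≤ |θ * (∫ x in Ioo d b, e x * (f₀ x - L))| + |L * Real.exp (θ * (d - b))| := by
            refine (abs_add_le _ _).trans ?_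
            rw [abs_neg]
        _ ≤ θ * (ε / 4 * K) + |L| * Real.exp (θ * (d - b)) := by
            have h2 : |L * Real.exp (θ * (d - b))| = |L| * Real.exp (θ * (d - b)) := by
              rw [abs_mul, abs_of_nonneg (Real.exp_pos _).le]
            linarith
        _ = ε / 4 * (1 - Real.exp (θ * (d - b))) + |L| * Real.exp (θ * (d - b)) := by
            rw [← hKval]; ring
    have hθI1 : 0 ≤ θ * I1 ∧ θ * I1 < ε / 4 := by
      constructor
      · exact mul_nonneg hθpos.le hI1nonneg
      · calc θ * I1 ≤ θ * Real.exp (θ * (d - b)) :=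
            mul_le_mul_of_nonneg_left hI1le hθpos.le
          _ < ε / 4 := hθ1
    have hfin : |θ * I1 + θ * I2 - L| < ε := by
      have h1 := hθI1.1
      have h2 := hθI1.2
      have h3 : ε / 4 * (θ * K) ≤ ε / 4 := by nlinarith
      have := abs_add_le (θ * I1) (θ * I2 - L)
      rw [abs_of_nonneg h1] at this
      calc |θ * I1 + θ * I2 - L| = |θ * I1 + (θ * I2 - L)| := by ring_nf
        _ ≤ θ * I1 + |θ * I2 - L| := this
        _ < ε := by
            have hE : 0 ≤ ε / 4 * Real.exp (θ * (d - b)) :=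
              mul_nonneg hε4.le (Real.exp_pos _).le
            linarith [hI2close]
    exact hfin
  -- final step: rewrite the target function
  have hfuneq : (fun θ : ℝ => θ * Real.exp (-θ * b) * Mtrunc f₀ a (b : EReal) θ)
      = fun θ => C⁻¹ * g θ := by
    funext θ
    rw [Mtrunc, hg]
    have : Real.exp (-θ * b) * ∫ x in S, Real.exp (θ * x) * f₀ x
        = ∫ x in S, Real.exp (θ * (x - b)) * f₀ x := by
      rw [← integral_const_mul]
      congr 1
      funext x
      rw [← mul_assoc, ← Real.exp_add]
      ring_nf
    calc θ * Real.exp (-θ * b) * ((F0 f₀ b - F0 f₀ a)⁻¹ * ∫ x in S, Real.exp (θ * x) * f₀ x)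
        = C⁻¹ * (θ * (Real.exp (-θ * b) * ∫ x in S, Real.exp (θ * x) * f₀ x)) := by
          rw [hC]; ring
      _ = C⁻¹ * (θ * ∫ x in S, Real.exp (θ * (x - b)) * f₀ x) := by rw [this]
  rw [hfuneq, div_eq_inv_mul]
  exact key.const_mul C⁻¹
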